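/- arXiv:1507.04230 — 4 statements merged into one kernel-verified Lean document; each statement's English description precedes it below -/
import Mathlib

section
/- Let U₁, U₂ ∈ ℝ^{n×d} be semi-orthogonal, let Λⱼ = diag(λ_{j,1},…,λ_{j,d}) (j = 1,2) have nonnegative entries with λ_{j,1} the largest and λ_{j,d} the smallest, let σ² > 0, set Σⱼ = UⱼΛⱼUⱼᵀ + σ²·Iₙ, and define the Bhattacharyya exponent K = (1/2)·log det((Σ₁+Σ₂)/2) − (1/4)·(log det Σ₁ + log det Σ₂). Let D = (U₁Λ₁U₁ᵀ + U₂Λ₂U₂ᵀ)/(2σ²) and assume every eigenvalue of D is at most 1. Then K ≤ (1/σ⁴)·(c₂ − (1/16)·λ_{1,d}·λ_{2,d}·trace(U₁ᵀU₂U₂ᵀU₁)), where c₂ = (σ⁴/4)·[ Σᵢ λ_{1,i}/σ² − (1/2)·Σᵢ (λ_{1,i}/(2σ²))² − Σᵢ log(1 + λ_{1,i}/σ²) ] + (σ⁴/4)·[ Σᵢ λ_{2,i}/σ² − (1/2)·Σᵢ (λ_{2,i}/(2σ²))² − Σᵢ log(1 + λ_{2,i}/σ²) ]. -/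
open Matrix

section Helpers
lemma det_aux {n m : ℕ} (U : Matrix (Fin n) (Fin m) ℝ) (hU : Uᵀ * U = 1)
    (l : Fin m → ℝ) {s : ℝ} (hs : 0 < s) :
    (U * Matrix.diagonal l * Uᵀ + s • 1).det = s ^ n * ∏ i, (1 + l i / s) := by
  have hs' : s ≠ 0 := ne_of_gt hs
  have key : U * Matrix.diagonal l * Uᵀ + s • 1
      = s • (1 + U * (s⁻¹ • (Matrix.diagonal l * Uᵀ))) := by
    rw [Matrix.mul_smul, smul_add, smul_smul, mul_inv_cancel₀ hs', one_smul, Matrix.mul_assoc]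
    rw [add_comm]
  rw [key, Matrix.det_smul, Fintype.card_fin, Matrix.det_one_add_mul_comm]
  have h2 : s⁻¹ • (Matrix.diagonal l * Uᵀ) * U = Matrix.diagonal (fun i => s⁻¹ * l i) := by
    rw [Matrix.smul_mul, Matrix.mul_assoc, hU, Matrix.mul_one, ← Matrix.diagonal_smul]
    rfl
  rw [h2]
  have h3 : (1 : Matrix (Fin m) (Fin m) ℝ) + Matrix.diagonal (fun i => s⁻¹ * l i)
      = Matrix.diagonal (fun i => 1 + s⁻¹ * l i) := by
    rw [← Matrix.diagonal_one, Matrix.diagonal_add]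
  rw [h3, Matrix.det_diagonal]
  simp [div_eq_inv_mul, mul_comm]

lemma trace_aux {n m : ℕ} (U : Matrix (Fin n) (Fin m) ℝ) (hU : Uᵀ * U = 1)
    (l : Fin m → ℝ) : (U * Matrix.diagonal l * Uᵀ).trace = ∑ i, l i := by
  rw [Matrix.trace_mul_cycle, hU, Matrix.one_mul, Matrix.trace_diagonal]



lemma log_le_aux {x : ℝ} (h0 : 0 ≤ x) (h1 : x ≤ 1) :
    Real.log (1 + x) ≤ x - x ^ 2 / 4 := by
  set f : ℝ → ℝ := fun y => y - y ^ 2 / 4 - Real.log (1 + y) with hf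
  have hder : ∀ y ∈ Set.Ioo (0:ℝ) 1, HasDerivAt f (1 - 2 * y / 4 - (1 + y)⁻¹) y := by
    intro y hy
    have h1y : (1 : ℝ) + y ≠ 0 := by nlinarith [hy.1]
    have hlog : HasDerivAt (fun z : ℝ => Real.log (1 + z)) ((1 + y)⁻¹) y := by
      have := (Real.hasDerivAt_log h1y).comp y ((hasDerivAt_id y).const_add 1)
      exact this.congr_deriv (by simp)
    exact ((hasDerivAt_id y).sub ((hasDerivAt_pow 2 y).div_const 4)).sub hlog |>.congr_deriv
      (by ring)
  have hmono : MonotoneOn f (Set.Icc (0:ℝ) 1) := by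
    apply monotoneOn_of_deriv_nonneg (convex_Icc 0 1)
    · apply ContinuousOn.sub (by fun_prop)
      apply Real.continuousOn_log.comp (by fun_prop)
      intro y hy
      simp only [Set.mem_Icc] at hy
      simp only [Set.mem_compl_iff, Set.mem_singleton_iff]
      nlinarith [hy.1]
    · rw [interior_Icc]
      intro y hy
      exact ((hder y hy).differentiableAt).differentiableWithinAt
    · rw [interior_Icc]
      intro y hy
      rw [(hder y hy).deriv]
      have hy1 : 0 < 1 + y := by linarith [hy.1]
      rw [sub_nonneg, inv_le_iff_one_le_mul₀ hy1]
      nlinarith [hy.1, hy.2]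
  have h0' : f 0 ≤ f x := hmono (by simp) (Set.mem_Icc.mpr ⟨h0, h1⟩) h0
  simp only [hf] at h0'
  simp only [ne_eq, OfNat.ofNat_ne_zero, not_false_eq_true, zero_pow, zero_div, sub_zero,
    add_zero, Real.log_one, sub_self] at h0'
  linarith

lemma trace_prod_form {m k : ℕ} (X : Matrix (Fin m) (Fin k) ℝ) (M : Matrix (Fin m) (Fin k) ℝ) :
    (X * Mᵀ).trace = ∑ i, ∑ j, X i j * M i j := by
  simp [Matrix.trace, Matrix.diag, Matrix.mul_apply]

lemma trace_cross {n m : ℕ} (U₁ U₂ : Matrix (Fin n) (Fin m) ℝ) (l₁ l₂ : Fin m → ℝ) :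
    ((U₁ * Matrix.diagonal l₁ * U₁ᵀ) * (U₂ * Matrix.diagonal l₂ * U₂ᵀ)).trace
      = ∑ i, ∑ j, l₁ i * l₂ j * ((U₁ᵀ * U₂) i j) ^ 2 := by
  set M := U₁ᵀ * U₂ with hM
  have hMT : U₂ᵀ * U₁ = Mᵀ := by rw [hM, Matrix.transpose_mul, Matrix.transpose_transpose]
  have key : (U₁ * Matrix.diagonal l₁ * U₁ᵀ) * (U₂ * Matrix.diagonal l₂ * U₂ᵀ)
      = U₁ * (Matrix.diagonal l₁ * (U₁ᵀ * U₂) * Matrix.diagonal l₂ * U₂ᵀ) := by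
    simp only [Matrix.mul_assoc]
  rw [key, Matrix.trace_mul_comm]
  have key2 : Matrix.diagonal l₁ * (U₁ᵀ * U₂) * Matrix.diagonal l₂ * U₂ᵀ * U₁
      = Matrix.diagonal l₁ * M * Matrix.diagonal l₂ * Mᵀ := by
    rw [← hM, ← hMT]; simp only [Matrix.mul_assoc]
  rw [key2, trace_prod_form]
  refine Finset.sum_congr rfl fun i _ => Finset.sum_congr rfl fun j _ => ?_
  rw [Matrix.mul_diagonal, Matrix.diagonal_mul]
  ring

lemma trace_T {n m : ℕ} (U₁ U₂ : Matrix (Fin n) (Fin m) ℝ) :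
    (U₁ᵀ * U₂ * U₂ᵀ * U₁).trace = ∑ i, ∑ j, ((U₁ᵀ * U₂) i j) ^ 2 := by
  have : U₁ᵀ * U₂ * U₂ᵀ * U₁ = (U₁ᵀ * U₂) * (U₁ᵀ * U₂)ᵀ := by
    rw [Matrix.transpose_mul, Matrix.transpose_transpose]
    simp only [Matrix.mul_assoc]
  rw [this, trace_prod_form]
  simp [sq]

lemma spec_facts {m : ℕ} {D : Matrix (Fin m) (Fin m) ℝ} (hDh : D.IsHermitian) :
    D.trace = ∑ i, hDh.eigenvalues i ∧
    (D * D).trace = ∑ i, hDh.eigenvalues i ^ 2 ∧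
    (1 + D).det = ∏ i, (1 + hDh.eigenvalues i) := by
  set V : Matrix (Fin m) (Fin m) ℝ := (hDh.eigenvectorUnitary : Matrix (Fin m) (Fin m) ℝ) with hV
  have hVV : star V * V = 1 := Matrix.mem_unitaryGroup_iff'.mp hDh.eigenvectorUnitary.2
  have hVV' : V * star V = 1 := Matrix.mem_unitaryGroup_iff.mp hDh.eigenvectorUnitary.2
  have hspec : D = V * Matrix.diagonal (RCLike.ofReal ∘ hDh.eigenvalues) * star V :=
    hDh.spectral_theorem
  have hdiag : Matrix.diagonal (RCLike.ofReal ∘ hDh.eigenvalues)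
      = Matrix.diagonal hDh.eigenvalues := rfl
  rw [hdiag] at hspec
  have habs : star V * (V * Matrix.diagonal hDh.eigenvalues) = Matrix.diagonal hDh.eigenvalues := by
    rw [← Matrix.mul_assoc, hVV, Matrix.one_mul]
  refine ⟨?_, ?_, ?_⟩
  · conv_lhs => rw [hspec]
    rw [Matrix.trace_mul_cycle, hVV, Matrix.one_mul, Matrix.trace_diagonal]
  · have key : D * D = V * (Matrix.diagonal hDh.eigenvalues * Matrix.diagonal hDh.eigenvalues)
        * star V := by
      conv_lhs => rw [hspec]
      rw [Matrix.mul_assoc (V * Matrix.diagonal hDh.eigenvalues) (star V),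
        ← Matrix.mul_assoc (star V), habs]
      simp only [Matrix.mul_assoc]
    rw [key, Matrix.diagonal_mul_diagonal, Matrix.trace_mul_cycle, hVV,
      Matrix.one_mul, Matrix.trace_diagonal]
    simp [sq]
  · have hd : Matrix.diagonal (fun i => 1 + hDh.eigenvalues i)
        = 1 + Matrix.diagonal hDh.eigenvalues := by
      rw [← Matrix.diagonal_one, Matrix.diagonal_add]
    have h1 : V * Matrix.diagonal (fun i => 1 + hDh.eigenvalues i) * star V = 1 + D := by
      rw [hd, Matrix.mul_add, Matrix.add_mul, Matrix.mul_one, hVV', ← hspec]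
    have h2 : V.det * (star V).det = 1 := by
      rw [← Matrix.det_mul, hVV', Matrix.det_one]
    rw [← h1, Matrix.det_mul, Matrix.det_mul, Matrix.det_diagonal]
    linear_combination (∏ i, (1 + hDh.eigenvalues i)) * h2

end Helpers

/-- Low-SNR upper bound on the Bhattacharyya exponent `K`.  Here `s` plays the
role of the noise variance `σ²`, `l₁ 0` (resp. `l₂ 0`) is the largest eigenvalue
and `l₁ (Fin.last d)` (resp. `l₂ (Fin.last d)`) the smallest. -/
theorem stmt_9 {n d : ℕ} (U₁ U₂ : Matrix (Fin n) (Fin (d + 1)) ℝ)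
    (hU₁ : U₁ᵀ * U₁ = 1) (hU₂ : U₂ᵀ * U₂ = 1)
    (l₁ l₂ : Fin (d + 1) → ℝ)
    (hl₁0 : ∀ i, 0 ≤ l₁ i) (hl₂0 : ∀ i, 0 ≤ l₂ i)
    (hl₁max : ∀ i, l₁ i ≤ l₁ 0) (hl₂max : ∀ i, l₂ i ≤ l₂ 0)
    (hl₁min : ∀ i, l₁ (Fin.last d) ≤ l₁ i) (hl₂min : ∀ i, l₂ (Fin.last d) ≤ l₂ i)
    (s : ℝ) (hs : 0 < s)
    (S₁ S₂ D : Matrix (Fin n) (Fin n) ℝ)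
    (hS₁ : S₁ = U₁ * Matrix.diagonal l₁ * U₁ᵀ + s • 1)
    (hS₂ : S₂ = U₂ * Matrix.diagonal l₂ * U₂ᵀ + s • 1)
    (hD : D = (2 * s)⁻¹ • (U₁ * Matrix.diagonal l₁ * U₁ᵀ + U₂ * Matrix.diagonal l₂ * U₂ᵀ))
    (hDh : D.IsHermitian) (hDeig : ∀ i, hDh.eigenvalues i ≤ 1)
    (K c₂ : ℝ)
    (hK : K = (1 / 2) * Real.log ((((2:ℝ)⁻¹) • (S₁ + S₂)).det) -
        (1 / 4) * (Real.log S₁.det + Real.log S₂.det))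
    (hc₂ : c₂ =
        (s ^ 2 / 4) * ((∑ i, l₁ i / s) - (1 / 2) * ∑ i, (l₁ i / (2 * s)) ^ 2 -
            ∑ i, Real.log (1 + l₁ i / s)) +
        (s ^ 2 / 4) * ((∑ i, l₂ i / s) - (1 / 2) * ∑ i, (l₂ i / (2 * s)) ^ 2 -
            ∑ i, Real.log (1 + l₂ i / s))) :
    K ≤ (1 / s ^ 2) *
        (c₂ - (1 / 16) * l₁ (Fin.last d) * l₂ (Fin.last d) *
          (U₁ᵀ * U₂ * U₂ᵀ * U₁).trace) := by
  have hs' : s ≠ 0 := ne_of_gt hs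
  set A := U₁ * Matrix.diagonal l₁ * U₁ᵀ with hA
  set B := U₂ * Matrix.diagonal l₂ * U₂ᵀ with hB
  -- positive semidefiniteness of D
  have hA1 : A.PosSemidef := by
    have := (Matrix.posSemidef_diagonal_iff.mpr hl₁0).mul_mul_conjTranspose_same U₁
    rwa [Matrix.conjTranspose_eq_transpose_of_trivial] at this
  have hA2 : B.PosSemidef := by
    have := (Matrix.posSemidef_diagonal_iff.mpr hl₂0).mul_mul_conjTranspose_same U₂
    rwa [Matrix.conjTranspose_eq_transpose_of_trivial] at this
  have hDpsd : D.PosSemidef := by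
    rw [hD]
    have h2s : (0:ℝ) ≤ (2*s)⁻¹ := by positivity
    exact (hA1.add hA2).smul h2s
  have hμ0 : ∀ i, 0 ≤ hDh.eigenvalues i := fun i => hDpsd.eigenvalues_nonneg i
  obtain ⟨htr, htr2, hdet⟩ := spec_facts hDh
  -- determinant formulas
  have hdet1 : S₁.det = s ^ n * ∏ i, (1 + l₁ i / s) := by rw [hS₁]; exact det_aux U₁ hU₁ l₁ hs
  have hdet2 : S₂.det = s ^ n * ∏ i, (1 + l₂ i / s) := by rw [hS₂]; exact det_aux U₂ hU₂ l₂ hs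
  have hhalf : ((2:ℝ)⁻¹) • (S₁ + S₂) = s • (1 + D) := by
    rw [hS₁, hS₂, hD, smul_add s, smul_smul, show s * (2*s)⁻¹ = 2⁻¹ by field_simp [mul_comm]]
    module
  have hdethalf : (((2:ℝ)⁻¹) • (S₁ + S₂)).det = s ^ n * ∏ i, (1 + hDh.eigenvalues i) := by
    rw [hhalf, Matrix.det_smul, Fintype.card_fin, hdet]
  -- log formulas
  have hpos1 : ∀ i : Fin (d+1), (0:ℝ) < 1 + l₁ i / s := by
    intro i; have := div_nonneg (hl₁0 i) hs.le; linarith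
  have hpos2 : ∀ i : Fin (d+1), (0:ℝ) < 1 + l₂ i / s := by
    intro i; have := div_nonneg (hl₂0 i) hs.le; linarith
  have hposμ : ∀ i : Fin n, (0:ℝ) < 1 + hDh.eigenvalues i := by
    intro i; have := hμ0 i; linarith
  have hlog1 : Real.log S₁.det = n * Real.log s + ∑ i, Real.log (1 + l₁ i / s) := by
    rw [hdet1, Real.log_mul (pow_ne_zero _ hs')
      (Finset.prod_ne_zero_iff.mpr fun i _ => (hpos1 i).ne'), Real.log_pow,
      Real.log_prod fun i _ => (hpos1 i).ne']
  have hlog2 : Real.log S₂.det = n * Real.log s + ∑ i, Real.log (1 + l₂ i / s) := by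
    rw [hdet2, Real.log_mul (pow_ne_zero _ hs')
      (Finset.prod_ne_zero_iff.mpr fun i _ => (hpos2 i).ne'), Real.log_pow,
      Real.log_prod fun i _ => (hpos2 i).ne']
  have hlogD : Real.log ((((2:ℝ)⁻¹) • (S₁ + S₂)).det)
      = n * Real.log s + ∑ i, Real.log (1 + hDh.eigenvalues i) := by
    rw [hdethalf, Real.log_mul (pow_ne_zero _ hs')
      (Finset.prod_ne_zero_iff.mpr fun i _ => (hposμ i).ne'), Real.log_pow,
      Real.log_prod fun i _ => (hposμ i).ne']
  -- K in terms of sums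
  have hKeq : K = (∑ i, Real.log (1 + hDh.eigenvalues i)) / 2 -
      ((∑ i, Real.log (1 + l₁ i / s)) + (∑ i, Real.log (1 + l₂ i / s))) / 4 := by
    rw [hK, hlogD, hlog1, hlog2]; ring
  -- trace identities
  have htrD : ∑ i, hDh.eigenvalues i = (2*s)⁻¹ * ((∑ i, l₁ i) + (∑ i, l₂ i)) := by
    rw [← htr, hD, Matrix.trace_smul, Matrix.trace_add, hA, hB,
      trace_aux U₁ hU₁, trace_aux U₂ hU₂, smul_eq_mul]
  have htrsq1 : (A * A).trace = ∑ i, (l₁ i)^2 := by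
    rw [hA, trace_cross U₁ U₁ l₁ l₁, hU₁]
    simp [Matrix.one_apply, sq]
  have htrsq2 : (B * B).trace = ∑ i, (l₂ i)^2 := by
    rw [hB, trace_cross U₂ U₂ l₂ l₂, hU₂]
    simp [Matrix.one_apply, sq]
  have htrAB : (A * B).trace = ∑ i, ∑ j, l₁ i * l₂ j * ((U₁ᵀ * U₂) i j) ^ 2 :=
    trace_cross U₁ U₂ l₁ l₂
  have htrD2 : ∑ i, hDh.eigenvalues i ^ 2
      = ((2*s)⁻¹)^2 * ((∑ i, (l₁ i)^2) + (∑ i, (l₂ i)^2)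
          + 2 * ∑ i, ∑ j, l₁ i * l₂ j * ((U₁ᵀ * U₂) i j) ^ 2) := by
    rw [← htr2, hD, Matrix.smul_mul, Matrix.mul_smul, smul_smul, Matrix.trace_smul,
      Matrix.add_mul, Matrix.mul_add, Matrix.mul_add, Matrix.trace_add, Matrix.trace_add,
      Matrix.trace_add, htrsq1, htrsq2, htrAB, Matrix.trace_mul_comm B A, htrAB, smul_eq_mul]
    ring
  have hT : (U₁ᵀ * U₂ * U₂ᵀ * U₁).trace = ∑ i, ∑ j, ((U₁ᵀ * U₂) i j) ^ 2 := trace_T U₁ U₂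
  -- cross term lower bound
  have hS_ge : l₁ (Fin.last d) * l₂ (Fin.last d) * (∑ i, ∑ j, ((U₁ᵀ * U₂) i j) ^ 2)
      ≤ ∑ i, ∑ j, l₁ i * l₂ j * ((U₁ᵀ * U₂) i j) ^ 2 := by
    rw [Finset.mul_sum]
    refine Finset.sum_le_sum fun i _ => ?_
    rw [Finset.mul_sum]
    refine Finset.sum_le_sum fun j _ => ?_
    have h1 : l₁ (Fin.last d) * l₂ (Fin.last d) ≤ l₁ i * l₂ j :=
      mul_le_mul (hl₁min i) (hl₂min j) (hl₂0 _) (hl₁0 i)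
    exact mul_le_mul_of_nonneg_right h1 (sq_nonneg _)
  -- the log inequality
  have hsumlog : ∑ i, Real.log (1 + hDh.eigenvalues i)
      ≤ (∑ i, hDh.eigenvalues i) - (∑ i, hDh.eigenvalues i ^ 2) / 4 := by
    calc ∑ i, Real.log (1 + hDh.eigenvalues i)
        ≤ ∑ i, (hDh.eigenvalues i - hDh.eigenvalues i ^ 2 / 4) :=
          Finset.sum_le_sum fun i _ => log_le_aux (hμ0 i) (hDeig i)
      _ = (∑ i, hDh.eigenvalues i) - (∑ i, hDh.eigenvalues i ^ 2) / 4 := by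
          rw [Finset.sum_sub_distrib, Finset.sum_div]
  -- final arithmetic
  rw [hKeq, hc₂, hT]
  have hkey : (1 / s ^ 2) *
      ((s ^ 2 / 4) * ((∑ i, l₁ i / s) - (1 / 2) * ∑ i, (l₁ i / (2 * s)) ^ 2 -
            ∑ i, Real.log (1 + l₁ i / s)) +
        (s ^ 2 / 4) * ((∑ i, l₂ i / s) - (1 / 2) * ∑ i, (l₂ i / (2 * s)) ^ 2 -
            ∑ i, Real.log (1 + l₂ i / s)) -
        (1 / 16) * l₁ (Fin.last d) * l₂ (Fin.last d) *
          (∑ i, ∑ j, ((U₁ᵀ * U₂) i j) ^ 2)) -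
      (((∑ i, hDh.eigenvalues i) - (∑ i, hDh.eigenvalues i ^ 2) / 4) / 2 -
        ((∑ i, Real.log (1 + l₁ i / s)) + (∑ i, Real.log (1 + l₂ i / s))) / 4)
      = (1 / (16 * s^2)) *
          ((∑ i, ∑ j, l₁ i * l₂ j * ((U₁ᵀ * U₂) i j) ^ 2) -
            l₁ (Fin.last d) * l₂ (Fin.last d) * (∑ i, ∑ j, ((U₁ᵀ * U₂) i j) ^ 2)) := by
    rw [htrD, htrD2]
    have e1 : ∑ i, l₁ i / s = (∑ i, l₁ i) / s := by rw [Finset.sum_div]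
    have e2 : ∑ i, l₂ i / s = (∑ i, l₂ i) / s := by rw [Finset.sum_div]
    have e3 : ∑ i, (l₁ i / (2*s)) ^ 2 = (∑ i, (l₁ i)^2) / (2*s)^2 := by
      rw [Finset.sum_div]; exact Finset.sum_congr rfl fun i _ => by rw [div_pow]
    have e4 : ∑ i, (l₂ i / (2*s)) ^ 2 = (∑ i, (l₂ i)^2) / (2*s)^2 := by
      rw [Finset.sum_div]; exact Finset.sum_congr rfl fun i _ => by rw [div_pow]
    rw [e1, e2, e3, e4]
    field_simp
    ring
  have hfrac : (0:ℝ) ≤ 1 / (16 * s^2) := by positivity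
  have h1 : (0:ℝ) ≤ (1 / (16 * s^2)) *
      ((∑ i, ∑ j, l₁ i * l₂ j * ((U₁ᵀ * U₂) i j) ^ 2) -
        l₁ (Fin.last d) * l₂ (Fin.last d) * (∑ i, ∑ j, ((U₁ᵀ * U₂) i j) ^ 2)) :=
    mul_nonneg hfrac (sub_nonneg.mpr hS_ge)
  linarith [hkey, hsumlog, h1]
end

section
/- Let U₁, U₂ ∈ ℝ^{n×d} be semi-orthogonal, let Λⱼ = diag(λ_{j,1},…,λ_{j,d}) (j = 1,2) have nonnegative entries with λ_{j,1} the largest, let σ² > 0, set Σⱼ = UⱼΛⱼUⱼᵀ + σ²·Iₙ, and define the Bhattacharyya exponent K = (1/2)·log det((Σ₁+Σ₂)/2) − (1/4)·(log det Σ₁ + log det Σ₂). Let D = (U₁Λ₁U₁ᵀ + U₂Λ₂U₂ᵀ)/(2σ²) and assume every eigenvalue of D is at most 1. Then K ≥ (1/σ⁴)·(c₃ − (1/8)·λ_{1,1}·λ_{2,1}·trace(U₁ᵀU₂U₂ᵀU₁)), where c₃ = (σ⁴/4)·[ Σᵢ λ_{1,i}/σ² − Σᵢ (λ_{1,i}/(2σ²))²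 − Σᵢ log(1 + λ_{1,i}/σ²) ] + (σ⁴/4)·[ Σᵢ λ_{2,i}/σ² − Σᵢ (λ_{2,i}/(2σ²))² − Σᵢ log(1 + λ_{2,i}/σ²) ]. -/
open Matrix

private lemma aux_log_ineq (x : ℝ) (hx0 : 0 ≤ x) : x - x^2/2 ≤ Real.log (1 + x) := by
  set f : ℝ → ℝ := fun t => Real.log (1+t) - t + t^2/2 with hf
  have hd : ∀ y : ℝ, 0 < y → HasDerivAt f ((1+y)⁻¹ - 1 + y) y := by
    intro y hy
    have h1 : HasDerivAt (fun t : ℝ => 1 + t) 1 y := (hasDerivAt_id y).const_add 1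
    have h2 : HasDerivAt (fun t : ℝ => Real.log (1+t)) ((1+y)⁻¹) y := by
      have h := (Real.hasDerivAt_log (by linarith : (1:ℝ)+y ≠ 0)).comp y h1
      rw [mul_one] at h
      exact h
    have h3 : HasDerivAt (fun t : ℝ => t^2/2) y y := by
      have := (hasDerivAt_pow 2 y).div_const 2
      norm_num at this
      simpa using this
    exact (h2.sub (hasDerivAt_id y)).add h3
  have hc : ContinuousOn f (Set.Ici 0) := by
    apply ContinuousOn.add
    apply ContinuousOn.sub
    · exact ContinuousOn.log (by fun_prop) (fun y hy => by
        have := Set.mem_Ici.mp hy; nlinarith)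
    · fun_prop
    · fun_prop
  have hmono : MonotoneOn f (Set.Ici (0:ℝ)) := by
    apply monotoneOn_of_deriv_nonneg (convex_Ici 0) hc
    · intro y hy
      rw [interior_Ici] at hy
      exact (hd y (Set.mem_Ioi.mp hy)).differentiableAt.differentiableWithinAt
    · intro y hy
      rw [interior_Ici] at hy
      have hy' := Set.mem_Ioi.mp hy
      rw [(hd y hy').deriv]
      have h1y : (0:ℝ) < 1 + y := by linarith [hy']
      have := mul_inv_cancel₀ h1y.ne'
      nlinarith [sq_nonneg y, inv_nonneg.mpr h1y.le]
  have := hmono (Set.self_mem_Ici) (Set.mem_Ici.mpr hx0) hx0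
  simp [hf] at this
  linarith

private lemma aux_trace_herm {m : ℕ} (A : Matrix (Fin m) (Fin m) ℝ) (hA : A.IsHermitian) :
    A.trace = ∑ i, hA.eigenvalues i := by
  nth_rewrite 1 [hA.spectral_theorem]
  simp only [Unitary.conjStarAlgAut_apply, Unitary.coe_star]
  rw [trace_mul_cycle,
    show (star (hA.eigenvectorUnitary : Matrix (Fin m) (Fin m) ℝ)) * ↑hA.eigenvectorUnitary = 1
      from Unitary.coe_star_mul_self _,
    one_mul, trace_diagonal]
  simp

private lemma aux_trace_sq {m : ℕ} (A : Matrix (Fin m) (Fin m) ℝ) (hA : A.IsHermitian) :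
    (A*A).trace = ∑ i, (hA.eigenvalues i)^2 := by
  set V : Matrix (Fin m) (Fin m) ℝ := ↑hA.eigenvectorUnitary with hV
  set dg : Matrix (Fin m) (Fin m) ℝ := diagonal (RCLike.ofReal ∘ hA.eigenvalues) with hdg
  have hsV : star V * V = 1 := Unitary.coe_star_mul_self _
  have h : A = V * dg * star V := hA.spectral_theorem
  calc (A*A).trace = (V * dg * star V * (V * dg * star V)).trace := by rw [← h]
    _ = (V * (dg * dg) * star V).trace := by
          rw [show V * dg * star V * (V * dg * star V) = V * dg * (star V * V) * dg * star V by
            noncomm_ring]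
          rw [hsV]; noncomm_ring
    _ = ((star V * V) * (dg * dg)).trace := by rw [trace_mul_cycle]
    _ = ∑ i, (hA.eigenvalues i)^2 := by
          rw [hsV, one_mul, hdg, diagonal_mul_diagonal, trace_diagonal]
          simp [pow_two]

private lemma aux_det_one_add {m : ℕ} (A : Matrix (Fin m) (Fin m) ℝ) (hA : A.IsHermitian) :
    (1 + A).det = ∏ i, (1 + hA.eigenvalues i) := by
  set V : Matrix (Fin m) (Fin m) ℝ := ↑hA.eigenvectorUnitary with hV
  set dg : Matrix (Fin m) (Fin m) ℝ := diagonal (RCLike.ofReal ∘ hA.eigenvalues) with hdg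
  have hsV : star V * V = 1 := Unitary.coe_star_mul_self _
  have hVs : V * star V = 1 := Unitary.coe_mul_star_self _
  have h : A = V * dg * star V := hA.spectral_theorem
  have h2 : 1 + A = V * (1 + dg) * star V := by
    rw [h, Matrix.mul_add, Matrix.add_mul, Matrix.mul_one, hVs]
  rw [h2, det_mul, det_mul, mul_comm, ← mul_assoc, ← det_mul, hsV, det_one, one_mul]
  have : (1 : Matrix (Fin m) (Fin m) ℝ) + dg = diagonal (fun i => 1 + hA.eigenvalues i) := by
    rw [hdg, ← diagonal_one, diagonal_add]
    rfl
  rw [this, det_diagonal]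

private lemma aux_det_spiked {n d : ℕ} (U : Matrix (Fin n) (Fin d) ℝ) (hU : Uᵀ * U = 1)
    (l : Fin d → ℝ) (s : ℝ) (hs : 0 < s) :
    (U * Matrix.diagonal l * Uᵀ + s • 1).det = s ^ n * ∏ i, (1 + l i / s) := by
  have h1 : U * Matrix.diagonal l * Uᵀ + s • 1
      = s • (1 + U * (s⁻¹ • (Matrix.diagonal l * Uᵀ))) := by
    rw [smul_add, Matrix.mul_smul, smul_smul, mul_inv_cancel₀ hs.ne', one_smul, add_comm,
      Matrix.mul_assoc]
  rw [h1, det_smul, det_one_add_mul_comm]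
  have h2 : s⁻¹ • (Matrix.diagonal l * Uᵀ) * U = Matrix.diagonal (fun i => 1 * (l i / s)) - 0 := by
    rw [Matrix.smul_mul, Matrix.mul_assoc, hU, Matrix.mul_one, sub_zero]
    ext i j
    rcases eq_or_ne i j with h | h
    · subst h; simp [Matrix.diagonal_apply_eq, div_eq_inv_mul]
    · simp [Matrix.diagonal_apply_ne _ h, h]
  rw [h2, sub_zero]
  have h3 : (1 : Matrix (Fin d) (Fin d) ℝ) + Matrix.diagonal (fun i => 1 * (l i / s))
      = Matrix.diagonal (fun i => 1 + l i / s) := by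
    rw [← diagonal_one, diagonal_add]
    simp
  rw [h3, det_diagonal]
  simp

private lemma aux_logdet {n d : ℕ} (U : Matrix (Fin n) (Fin d) ℝ) (hU : Uᵀ * U = 1)
    (l : Fin d → ℝ) (hl : ∀ i, 0 ≤ l i) (s : ℝ) (hs : 0 < s) :
    Real.log ((U * Matrix.diagonal l * Uᵀ + s • 1).det)
      = n * Real.log s + ∑ i, Real.log (1 + l i / s) := by
  have hpos : ∀ i : Fin d, (0:ℝ) < 1 + l i / s := by
    intro i
    have := hl i
    positivity
  rw [aux_det_spiked U hU l s hs,
    Real.log_mul (pow_ne_zero _ hs.ne') (Finset.prod_ne_zero_iff.mpr fun i _ => (hpos i).ne'),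
    Real.log_pow, Real.log_prod (fun i _ => (hpos i).ne')]

private lemma aux_trace_UDU {n d : ℕ} (U : Matrix (Fin n) (Fin d) ℝ) (hU : Uᵀ * U = 1)
    (l : Fin d → ℝ) : (U * Matrix.diagonal l * Uᵀ).trace = ∑ i, l i := by
  rw [trace_mul_cycle, hU, one_mul, trace_diagonal]

private lemma aux_trace_prod {n d e : ℕ} (U : Matrix (Fin n) (Fin d) ℝ)
    (V : Matrix (Fin n) (Fin e) ℝ) (a : Fin d → ℝ) (b : Fin e → ℝ) :
    ((U * Matrix.diagonal a * Uᵀ) * (V * Matrix.diagonal b * Vᵀ)).trace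
      = ∑ i, ∑ j, a i * b j * ((Uᵀ * V) i j)^2 := by
  have h1 : (U * Matrix.diagonal a * Uᵀ) * (V * Matrix.diagonal b * Vᵀ)
      = U * (Matrix.diagonal a * (Uᵀ * V) * Matrix.diagonal b * Vᵀ) := by
    simp only [Matrix.mul_assoc]
  rw [h1, trace_mul_comm]
  have h2 : Matrix.diagonal a * (Uᵀ * V) * Matrix.diagonal b * Vᵀ * U
      = Matrix.diagonal a * (Uᵀ * V) * Matrix.diagonal b * (Uᵀ * V)ᵀ := by
    rw [Matrix.mul_assoc (Matrix.diagonal a * (Uᵀ * V) * Matrix.diagonal b) Vᵀ U,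
      transpose_mul, transpose_transpose]
  rw [h2, Matrix.trace]
  apply Finset.sum_congr rfl
  intro i _
  rw [Matrix.diag_apply, Matrix.mul_apply]
  apply Finset.sum_congr rfl
  intro j _
  rw [Matrix.mul_diagonal, Matrix.diagonal_mul, transpose_apply]
  ring

private lemma aux_sum_one {d : ℕ} (a b : Fin d → ℝ) :
    ∑ i, ∑ j, a i * b j * (((1 : Matrix (Fin d) (Fin d) ℝ)) i j)^2 = ∑ i, a i * b i := by
  simp [Matrix.one_apply, apply_ite (· ^ 2), mul_ite, Finset.sum_ite_eq]

private lemma aux_trace_MMt {d e : ℕ} (M : Matrix (Fin d) (Fin e) ℝ) :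
    (M * Mᵀ).trace = ∑ i, ∑ j, (M i j)^2 := by
  rw [Matrix.trace]
  simp [Matrix.mul_apply, Matrix.diag, pow_two]

private lemma aux_psd {n d : ℕ} (U : Matrix (Fin n) (Fin d) ℝ) (l : Fin d → ℝ)
    (hl : ∀ i, 0 ≤ l i) : (U * Matrix.diagonal l * Uᵀ).PosSemidef := by
  have h : (Matrix.diagonal l).PosSemidef := posSemidef_diagonal_iff.mpr hl
  have := h.mul_mul_conjTranspose_same U
  simpa using this

/-- Low-SNR lower bound on the Bhattacharyya exponent `K`.  Here `s` plays the
role of the noise variance `σ²` and `l₁ 0` (resp. `l₂ 0`) is the largest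
eigenvalue of `Λ₁` (resp. `Λ₂`). -/
theorem stmt_10 {n d : ℕ} (U₁ U₂ : Matrix (Fin n) (Fin (d + 1)) ℝ)
    (hU₁ : U₁ᵀ * U₁ = 1) (hU₂ : U₂ᵀ * U₂ = 1)
    (l₁ l₂ : Fin (d + 1) → ℝ)
    (hl₁0 : ∀ i, 0 ≤ l₁ i) (hl₂0 : ∀ i, 0 ≤ l₂ i)
    (hl₁max : ∀ i, l₁ i ≤ l₁ 0) (hl₂max : ∀ i, l₂ i ≤ l₂ 0)
    (s : ℝ) (hs : 0 < s)
    (S₁ S₂ D : Matrix (Fin n) (Fin n) ℝ)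
    (hS₁ : S₁ = U₁ * Matrix.diagonal l₁ * U₁ᵀ + s • 1)
    (hS₂ : S₂ = U₂ * Matrix.diagonal l₂ * U₂ᵀ + s • 1)
    (hD : D = (2 * s)⁻¹ • (U₁ * Matrix.diagonal l₁ * U₁ᵀ + U₂ * Matrix.diagonal l₂ * U₂ᵀ))
    (hDh : D.IsHermitian) (hDeig : ∀ i, hDh.eigenvalues i ≤ 1)
    (K c₃ : ℝ)
    (hK : K = (1 / 2) * Real.log ((((2:ℝ)⁻¹) • (S₁ + S₂)).det) -
        (1 / 4) * (Real.log S₁.det + Real.log S₂.det))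
    (hc₃ : c₃ =
        (s ^ 2 / 4) * ((∑ i, l₁ i / s) - (∑ i, (l₁ i / (2 * s)) ^ 2) -
            ∑ i, Real.log (1 + l₁ i / s)) +
        (s ^ 2 / 4) * ((∑ i, l₂ i / s) - (∑ i, (l₂ i / (2 * s)) ^ 2) -
            ∑ i, Real.log (1 + l₂ i / s))) :
    K ≥ (1 / s ^ 2) *
        (c₃ - (1 / 8) * l₁ 0 * l₂ 0 * (U₁ᵀ * U₂ * U₂ᵀ * U₁).trace) := by
  subst hS₁ hS₂ hD hK hc₃
  set A₁ := U₁ * Matrix.diagonal l₁ * U₁ᵀ with hA₁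
  set A₂ := U₂ * Matrix.diagonal l₂ * U₂ᵀ with hA₂
  have hA₁psd := aux_psd U₁ l₁ hl₁0
  have hA₂psd := aux_psd U₂ l₂ hl₂0
  have hDpsd : ((2*s)⁻¹ • (A₁ + A₂)).PosSemidef := by
    refine ⟨hDh, fun x => ?_⟩
    exact ((hA₁psd.add hA₂psd).smul (by positivity : (0:ℝ) ≤ (2*s)⁻¹)).2 x
  have hμ0 : ∀ i, 0 ≤ hDh.eigenvalues i := fun i => hDpsd.eigenvalues_nonneg i
  -- log-dets of the two covariance matrices
  have hdet1 := aux_logdet U₁ hU₁ l₁ hl₁0 s hs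
  have hdet2 := aux_logdet U₂ hU₂ l₂ hl₂0 s hs
  -- log-det of the average
  have hhalf : ((2:ℝ)⁻¹) • (A₁ + s • 1 + (A₂ + s • 1)) = s • (1 + (2*s)⁻¹ • (A₁ + A₂)) := by
    match_scalars <;> field_simp <;> norm_num
  have hpos1μ : ∀ i : Fin n, (0:ℝ) < 1 + hDh.eigenvalues i := by
    intro i; have := hμ0 i; linarith
  have hdethalf : Real.log ((((2:ℝ)⁻¹) • (A₁ + s • 1 + (A₂ + s • 1))).det)
      = n * Real.log s + ∑ i, Real.log (1 + hDh.eigenvalues i) := by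
    rw [hhalf, det_smul, aux_det_one_add _ hDh,
      Real.log_mul (by positivity)
        (Finset.prod_ne_zero_iff.mpr fun i _ => (hpos1μ i).ne'),
      Real.log_pow, Real.log_prod (fun i _ => (hpos1μ i).ne')]
    simp
  -- traces
  set T : ℝ := ∑ i, ∑ j, l₁ i * l₂ j * ((U₁ᵀ * U₂) i j)^2 with hT
  have htrD : ((2*s)⁻¹ • (A₁+A₂)).trace = (2*s)⁻¹ * ((∑ i, l₁ i) + (∑ i, l₂ i)) := by
    rw [trace_smul, trace_add, aux_trace_UDU U₁ hU₁, aux_trace_UDU U₂ hU₂, smul_eq_mul]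
  have htrA11 : (A₁ * A₁).trace = ∑ i, (l₁ i)^2 := by
    rw [hA₁, aux_trace_prod U₁ U₁ l₁ l₁, hU₁, aux_sum_one]
    simp [pow_two]
  have htrA22 : (A₂ * A₂).trace = ∑ i, (l₂ i)^2 := by
    rw [hA₂, aux_trace_prod U₂ U₂ l₂ l₂, hU₂, aux_sum_one]
    simp [pow_two]
  have htrA12 : (A₁ * A₂).trace = T := by
    rw [hA₁, hA₂, aux_trace_prod U₁ U₂ l₁ l₂]
  have htrDD : (((2*s)⁻¹ • (A₁+A₂)) * ((2*s)⁻¹ • (A₁+A₂))).trace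
      = (2*s)⁻¹ * (2*s)⁻¹ * ((∑ i, (l₁ i)^2) + (∑ i, (l₂ i)^2) + 2 * T) := by
    rw [Matrix.smul_mul, Matrix.mul_smul, smul_smul, trace_smul, smul_eq_mul,
      Matrix.add_mul, Matrix.mul_add, Matrix.mul_add, trace_add, trace_add, trace_add,
      htrA11, htrA22, htrA12, trace_mul_comm A₂ A₁, htrA12]
    ring
  -- eigenvalue sums
  have hμsum : ∑ i, hDh.eigenvalues i = (2*s)⁻¹ * ((∑ i, l₁ i) + (∑ i, l₂ i)) := by
    rw [← aux_trace_herm _ hDh, htrD]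
  have hμsq : ∑ i, (hDh.eigenvalues i)^2
      = (2*s)⁻¹ * (2*s)⁻¹ * ((∑ i, (l₁ i)^2) + (∑ i, (l₂ i)^2) + 2 * T) := by
    rw [← aux_trace_sq _ hDh, htrDD]
  -- bound on the trace term
  have htrR : (U₁ᵀ * U₂ * U₂ᵀ * U₁).trace = ∑ i, ∑ j, ((U₁ᵀ * U₂) i j)^2 := by
    have h : U₁ᵀ * U₂ * U₂ᵀ * U₁ = (U₁ᵀ * U₂) * (U₁ᵀ * U₂)ᵀ := by
      rw [transpose_mul, transpose_transpose, Matrix.mul_assoc]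
    rw [h, aux_trace_MMt]
  have hT_le : T ≤ l₁ 0 * l₂ 0 * (U₁ᵀ * U₂ * U₂ᵀ * U₁).trace := by
    rw [htrR, Finset.mul_sum]
    apply Finset.sum_le_sum
    intro i _
    rw [Finset.mul_sum]
    apply Finset.sum_le_sum
    intro j _
    have hsq := sq_nonneg ((U₁ᵀ * U₂) i j)
    exact mul_le_mul_of_nonneg_right
      (mul_le_mul (hl₁max i) (hl₂max j) (hl₂0 j) (hl₁0 0)) hsq
  -- lower bound for the sum of logs of eigenvalues
  have hSbound : (∑ i, hDh.eigenvalues i) - (∑ i, (hDh.eigenvalues i)^2)/2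
      ≤ ∑ i, Real.log (1 + hDh.eigenvalues i) := by
    have h := Finset.sum_le_sum
      (fun i (_ : i ∈ Finset.univ) => aux_log_ineq (hDh.eigenvalues i) (hμ0 i))
    simpa [Finset.sum_sub_distrib, Finset.sum_div] using h
  -- scalar endgame
  rw [ge_iff_le, hdethalf, hdet1, hdet2]
  have e₁ : ∑ i, l₁ i / s = (∑ i, l₁ i)/s := (Finset.sum_div _ _ _).symm
  have e₂ : ∑ i, l₂ i / s = (∑ i, l₂ i)/s := (Finset.sum_div _ _ _).symm
  have e₃ : ∑ i, (l₁ i / (2*s))^2 = (∑ i, (l₁ i)^2)/(2*s)^2 := by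
    simp_rw [div_pow]
    exact (Finset.sum_div _ _ _).symm
  have e₄ : ∑ i, (l₂ i / (2*s))^2 = (∑ i, (l₂ i)^2)/(2*s)^2 := by
    simp_rw [div_pow]
    exact (Finset.sum_div _ _ _).symm
  rw [e₁, e₂, e₃, e₄]
  set a₁ := ∑ i, l₁ i
  set a₂ := ∑ i, l₂ i
  set b₁ := ∑ i, (l₁ i)^2
  set b₂ := ∑ i, (l₂ i)^2
  set L₁ := ∑ i, Real.log (1 + l₁ i / s)
  set L₂ := ∑ i, Real.log (1 + l₂ i / s)
  set R := (U₁ᵀ * U₂ * U₂ᵀ * U₁).trace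
  set X : ℝ := (a₁+a₂)/(4*s) - (b₁+b₂)/(16*s^2) - (L₁+L₂)/4 with hX
  have E1 : (1/2) * ((2*s)⁻¹ * (a₁+a₂) - ((2*s)⁻¹ * (2*s)⁻¹ * (b₁+b₂+2*T))/2)
      - (1/4)*(L₁+L₂) = X - T/(8*s^2) := by
    rw [hX]; field_simp; ring
  have E2 : (1/s^2) * ((s^2/4) * (a₁/s - b₁/(2*s)^2 - L₁)
      + (s^2/4) * (a₂/s - b₂/(2*s)^2 - L₂) - (1/8)*(l₁ 0)*(l₂ 0)*R)
      = X - ((l₁ 0)*(l₂ 0)*R)/(8*s^2) := by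
    rw [hX]; field_simp; ring
  have hdiv : T/(8*s^2) ≤ ((l₁ 0)*(l₂ 0)*R)/(8*s^2) :=
    (div_le_div_iff_of_pos_right (by positivity)).mpr hT_le
  have hlog : (2*s)⁻¹ * (a₁+a₂) - ((2*s)⁻¹ * (2*s)⁻¹ * (b₁+b₂+2*T))/2
      ≤ ∑ i, Real.log (1 + hDh.eigenvalues i) := by
    rw [← hμsum, ← hμsq]
    exact hSbound
  linarith [E1, E2, hdiv, hlog]
end

section
/- Let U₁, U₂ ∈ ℝ^{n×d} be semi-orthogonal, let Λⱼ = diag(λ_{j,1},…,λ_{j,d}) (j = 1,2) have nonnegative entries with λ_{j,1} the largest, let σ² > 0, set Σⱼ = UⱼΛⱼUⱼᵀ + σ²·Iₙ, and define the Bhattacharyya exponent K = (1/2)·log det((Σ₁+Σ₂)/2) − (1/4)·(log det Σ₁ + log det Σ₂). Let D = (U₁Λ₁U₁ᵀ + U₂Λ₂U₂ᵀ)/(2σ²), let m be the number of nonzero eigenvalues of D (counted with multiplicity), and suppose p > 1 and 0 ≤ L < (p−1)/2 are such that (i) log(1+λ) ≥ log(1+p) + (λ−p)/(1+p) − (λ−p)²/(1+p)²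 for every λ ∈ [L, p], and (ii) every nonzero eigenvalue of D lies in [L, p]. Then K ≥ c₄·m − (λ_{1,1}·λ_{2,1}/(4σ⁴(1+p)²))·trace(U₁ᵀU₂U₂ᵀU₁) − c₅, where c₄ = (1/2)·[log(1+p) − p/(1+p) − p²/(1+p)²] and c₅ = −((1+3p)/(4σ²(1+p)²))·Σᵢ(λ_{1,i} + λ_{2,i}) + (Σᵢ λ_{1,i}² + Σᵢ λ_{2,i}²)/(8σ⁴(1+p)²) + (1/4)·Σᵢ[log(1 + λ_{1,i}/σ²) + log(1 + λ_{2,i}/σ²)]. Consequently the Bhattacharyya bound satisfies (1/2)·e^{−K} ≤ (1/2)·exp{−c₄·m + (λ_{1,1}λ_{2,1}/(4σ⁴(1+p)²))·trace(U₁ᵀU₂U₂ᵀU₁) + c₅}. -/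
open Matrix


-- Lemma A: det (U Λ Uᵀ + s•1) = s^n ∏ (1 + l i / s)
lemma auxA {n k : ℕ} (U : Matrix (Fin n) (Fin k) ℝ) (hU : Uᵀ * U = 1)
    (l : Fin k → ℝ) (s : ℝ) (hs : s ≠ 0) :
    (U * Matrix.diagonal l * Uᵀ + s • 1).det = s ^ n * ∏ i, (1 + l i / s) := by
  have hd : Matrix.diagonal l = s • Matrix.diagonal (fun i => l i / s) := by
    ext i j
    rcases eq_or_ne i j with h | h
    · subst h; simp [Matrix.diagonal_apply_eq]; field_simp
    · simp [Matrix.diagonal_apply_ne _ h]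
  have h1 : U * Matrix.diagonal l * Uᵀ + s • 1
      = s • (1 + U * Matrix.diagonal (fun i => l i / s) * Uᵀ) := by
    rw [hd]
    rw [smul_add, add_comm]
    congr 1
    rw [Matrix.mul_smul, Matrix.smul_mul]
  rw [h1, Matrix.det_smul, Fintype.card_fin]
  congr 1
  rw [Matrix.det_one_add_mul_comm, ← Matrix.mul_assoc, hU, Matrix.one_mul]
  have : (1 : Matrix (Fin k) (Fin k) ℝ) + Matrix.diagonal (fun i => l i / s)
      = Matrix.diagonal (fun i => 1 + l i / s) := by
    rw [← Matrix.diagonal_one, Matrix.diagonal_add]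
  rw [this, Matrix.det_diagonal]


lemma aux_trace_diag {k : ℕ} (d : Fin k → ℝ) (B : Matrix (Fin k) (Fin k) ℝ) :
    (Matrix.diagonal d * B).trace = ∑ i, d i * B i i := by
  simp [Matrix.trace, Matrix.diag, Matrix.diagonal_mul]

lemma aux_trace_UdU {n k : ℕ} (U : Matrix (Fin n) (Fin k) ℝ) (hU : Uᵀ * U = 1)
    (l : Fin k → ℝ) : (U * Matrix.diagonal l * Uᵀ).trace = ∑ i, l i := by
  rw [Matrix.trace_mul_comm, ← Matrix.mul_assoc, hU, Matrix.one_mul, Matrix.trace_diagonal]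

lemma aux_trace_sq_s11 {n k : ℕ} (U : Matrix (Fin n) (Fin k) ℝ) (hU : Uᵀ * U = 1)
    (l : Fin k → ℝ) :
    ((U * Matrix.diagonal l * Uᵀ) * (U * Matrix.diagonal l * Uᵀ)).trace = ∑ i, (l i) ^ 2 := by
  have : (U * Matrix.diagonal l * Uᵀ) * (U * Matrix.diagonal l * Uᵀ)
      = U * Matrix.diagonal (fun i => l i ^ 2) * Uᵀ := by
    simp only [Matrix.mul_assoc]
    rw [← Matrix.mul_assoc Uᵀ U, hU, Matrix.one_mul,
      ← Matrix.mul_assoc (Matrix.diagonal l), Matrix.diagonal_mul_diagonal]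
    congr 2
    funext i; ring
  rw [this, aux_trace_UdU U hU]

lemma aux_cross_trace {n k : ℕ} (U₁ U₂ : Matrix (Fin n) (Fin k) ℝ)
    (l₁ l₂ : Fin k → ℝ) :
    ((U₁ * Matrix.diagonal l₁ * U₁ᵀ) * (U₂ * Matrix.diagonal l₂ * U₂ᵀ)).trace
      = ∑ i, ∑ j, l₁ i * l₂ j * ((U₁ᵀ * U₂) i j) ^ 2 := by
  have h1 : (U₁ * Matrix.diagonal l₁ * U₁ᵀ) * (U₂ * Matrix.diagonal l₂ * U₂ᵀ)
      = U₁ * (Matrix.diagonal l₁ * ((U₁ᵀ * U₂) * (Matrix.diagonal l₂ * U₂ᵀ))) := by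
    simp only [Matrix.mul_assoc]
  rw [h1, Matrix.trace_mul_comm]
  have h2 : Matrix.diagonal l₁ * ((U₁ᵀ * U₂) * (Matrix.diagonal l₂ * U₂ᵀ)) * U₁
      = Matrix.diagonal l₁ * ((U₁ᵀ * U₂) * (Matrix.diagonal l₂ * (U₂ᵀ * U₁))) := by
    simp only [Matrix.mul_assoc]
  rw [h2, aux_trace_diag]
  refine Finset.sum_congr rfl fun i _ => ?_
  rw [Matrix.mul_apply, Finset.mul_sum]
  refine Finset.sum_congr rfl fun j _ => ?_
  have hN : (U₂ᵀ * U₁) j i = (U₁ᵀ * U₂) i j := by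
    rw [Matrix.mul_apply, Matrix.mul_apply]
    exact Finset.sum_congr rfl fun a _ => by
      simp [Matrix.transpose_apply, mul_comm]
  rw [Matrix.diagonal_mul, hN]
  ring

lemma aux_gram_trace {n k : ℕ} (U₁ U₂ : Matrix (Fin n) (Fin k) ℝ) :
    (U₁ᵀ * U₂ * U₂ᵀ * U₁).trace = ∑ i, ∑ j, ((U₁ᵀ * U₂) i j) ^ 2 := by
  have h1 : U₁ᵀ * U₂ * U₂ᵀ * U₁ = (U₁ᵀ * U₂) * (U₁ᵀ * U₂)ᵀ := by
    rw [Matrix.transpose_mul, Matrix.transpose_transpose, Matrix.mul_assoc]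
  rw [h1]
  simp only [Matrix.trace, Matrix.diag, Matrix.mul_apply, Matrix.transpose_apply, sq]

lemma aux_conj_mul {n : ℕ} (V A B : Matrix (Fin n) (Fin n) ℝ) (h : star V * V = 1) :
    (V * A * star V) * (V * B * star V) = V * (A * B) * star V := by
  simp only [Matrix.mul_assoc]
  rw [← Matrix.mul_assoc (star V) V, h, Matrix.one_mul]

lemma aux_conj_trace {n : ℕ} (V A : Matrix (Fin n) (Fin n) ℝ) (h : star V * V = 1) :
    (V * A * star V).trace = A.trace := by
  rw [Matrix.trace_mul_comm, ← Matrix.mul_assoc, h, Matrix.one_mul]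

lemma aux_conj_det {n : ℕ} (V A : Matrix (Fin n) (Fin n) ℝ) (h : V * star V = 1) :
    (V * A * star V).det = A.det := by
  rw [Matrix.det_mul_right_comm, h, Matrix.one_mul]

section
variable {n : ℕ} {D : Matrix (Fin n) (Fin n) ℝ} (hD : D.IsHermitian)

lemma aux_spec : D = (hD.eigenvectorUnitary : Matrix (Fin n) (Fin n) ℝ) *
    Matrix.diagonal hD.eigenvalues * star (hD.eigenvectorUnitary : Matrix (Fin n) (Fin n) ℝ) := by
  have := hD.spectral_theorem
  simpa [RCLike.ofReal_real_eq_id] using this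

lemma auxB : (1 + D).det = ∏ i, (1 + hD.eigenvalues i) := by
  have hV1 : (hD.eigenvectorUnitary : Matrix (Fin n) (Fin n) ℝ) * star (hD.eigenvectorUnitary : Matrix (Fin n) (Fin n) ℝ) = 1 :=
    (Matrix.mem_unitaryGroup_iff).mp hD.eigenvectorUnitary.2
  have h1 : 1 + D = (hD.eigenvectorUnitary : Matrix (Fin n) (Fin n) ℝ) *
      (1 + Matrix.diagonal hD.eigenvalues) * star (hD.eigenvectorUnitary : Matrix (Fin n) (Fin n) ℝ) := by
    rw [Matrix.mul_add, Matrix.add_mul, Matrix.mul_one, hV1, ← aux_spec hD]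
  rw [h1, aux_conj_det _ _ hV1, ← Matrix.diagonal_one, Matrix.diagonal_add, Matrix.det_diagonal]

lemma auxC : D.trace = ∑ i, hD.eigenvalues i := by
  have hV1 : star (hD.eigenvectorUnitary : Matrix (Fin n) (Fin n) ℝ) * (hD.eigenvectorUnitary : Matrix (Fin n) (Fin n) ℝ) = 1 :=
    (Matrix.mem_unitaryGroup_iff').mp hD.eigenvectorUnitary.2
  conv_lhs => rw [aux_spec hD]
  rw [aux_conj_trace _ _ hV1, Matrix.trace_diagonal]

lemma auxD : (D * D).trace = ∑ i, (hD.eigenvalues i) ^ 2 := by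
  have hV1 : star (hD.eigenvectorUnitary : Matrix (Fin n) (Fin n) ℝ) * (hD.eigenvectorUnitary : Matrix (Fin n) (Fin n) ℝ) = 1 :=
    (Matrix.mem_unitaryGroup_iff').mp hD.eigenvectorUnitary.2
  conv_lhs => rw [aux_spec hD]
  rw [aux_conj_mul _ _ _ hV1, aux_conj_trace _ _ hV1, Matrix.diagonal_mul_diagonal,
    Matrix.trace_diagonal]
  exact Finset.sum_congr rfl fun i _ => (sq _).symm

end

/-- Moderate-SNR bound on the Bhattacharyya exponent `K`.  Here `s` plays the
role of the noise variance `σ²`, `l₁ 0` (resp. `l₂ 0`) is the largest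
eigenvalue of `Λ₁` (resp. `Λ₂`), and `m` is the number of nonzero eigenvalues
of `D` counted with multiplicity. -/
theorem stmt_11 {n d : ℕ} (U₁ U₂ : Matrix (Fin n) (Fin (d + 1)) ℝ)
    (hU₁ : U₁ᵀ * U₁ = 1) (hU₂ : U₂ᵀ * U₂ = 1)
    (l₁ l₂ : Fin (d + 1) → ℝ)
    (hl₁0 : ∀ i, 0 ≤ l₁ i) (hl₂0 : ∀ i, 0 ≤ l₂ i)
    (hl₁max : ∀ i, l₁ i ≤ l₁ 0) (hl₂max : ∀ i, l₂ i ≤ l₂ 0)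
    (s : ℝ) (hs : 0 < s)
    (S₁ S₂ D : Matrix (Fin n) (Fin n) ℝ)
    (hS₁ : S₁ = U₁ * Matrix.diagonal l₁ * U₁ᵀ + s • 1)
    (hS₂ : S₂ = U₂ * Matrix.diagonal l₂ * U₂ᵀ + s • 1)
    (hD : D = (2 * s)⁻¹ • (U₁ * Matrix.diagonal l₁ * U₁ᵀ + U₂ * Matrix.diagonal l₂ * U₂ᵀ))
    (hDh : D.IsHermitian)
    (m : ℕ)
    (hm : m = (Finset.univ.filter (fun i => hDh.eigenvalues i ≠ 0)).card)
    (p L : ℝ) (hp : 1 < p) (hL0 : 0 ≤ L) (hL : L < (p - 1) / 2)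
    (hlog : ∀ l ∈ Set.Icc L p,
        Real.log (1 + l) ≥
          Real.log (1 + p) + (l - p) / (1 + p) - (l - p) ^ 2 / (1 + p) ^ 2)
    (heig : ∀ i, hDh.eigenvalues i ≠ 0 → hDh.eigenvalues i ∈ Set.Icc L p)
    (K c₄ c₅ : ℝ)
    (hK : K = (1 / 2) * Real.log ((((2:ℝ)⁻¹) • (S₁ + S₂)).det) -
        (1 / 4) * (Real.log S₁.det + Real.log S₂.det))
    (hc₄ : c₄ = (1 / 2) * (Real.log (1 + p) - p / (1 + p) - p ^ 2 / (1 + p) ^ 2))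
    (hc₅ : c₅ = -((1 + 3 * p) / (4 * s * (1 + p) ^ 2)) * (∑ i, (l₁ i + l₂ i)) +
        ((∑ i, (l₁ i) ^ 2) + ∑ i, (l₂ i) ^ 2) / (8 * s ^ 2 * (1 + p) ^ 2) +
        (1 / 4) * ∑ i, (Real.log (1 + l₁ i / s) + Real.log (1 + l₂ i / s))) :
    K ≥ c₄ * m - (l₁ 0 * l₂ 0 / (4 * s ^ 2 * (1 + p) ^ 2)) *
          (U₁ᵀ * U₂ * U₂ᵀ * U₁).trace - c₅ ∧
      (1 / 2) * Real.exp (-K) ≤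
        (1 / 2) * Real.exp (-(c₄ * m) +
          (l₁ 0 * l₂ 0 / (4 * s ^ 2 * (1 + p) ^ 2)) *
            (U₁ᵀ * U₂ * U₂ᵀ * U₁).trace + c₅) := by
  have hs' : s ≠ 0 := ne_of_gt hs
  have hp0 : (0:ℝ) < 1 + p := by linarith
  have hp' : (1:ℝ) + p ≠ 0 := ne_of_gt hp0
  set μ := hDh.eigenvalues with hμ
  have hμ0 : ∀ i, 0 ≤ μ i := by
    intro i
    rcases eq_or_ne (μ i) 0 with h | h
    · exact le_of_eq h.symm
    · exact le_trans hL0 (heig i h).1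
  -- determinant computations
  have hdet1 : S₁.det = s ^ n * ∏ i, (1 + l₁ i / s) := by
    rw [hS₁]; exact auxA U₁ hU₁ l₁ s hs'
  have hdet2 : S₂.det = s ^ n * ∏ i, (1 + l₂ i / s) := by
    rw [hS₂]; exact auxA U₂ hU₂ l₂ s hs'
  have hhalf : ((2:ℝ)⁻¹) • (S₁ + S₂) = s • (1 + D) := by
    rw [hS₁, hS₂, hD]
    match_scalars <;> field_simp <;> norm_num
  have hdet0 : (((2:ℝ)⁻¹) • (S₁ + S₂)).det = s ^ n * ∏ i, (1 + μ i) := by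
    rw [hhalf, Matrix.det_smul, Fintype.card_fin, auxB hDh]
  -- log computations
  have hlog_aux : ∀ {q : ℕ} (f : Fin q → ℝ), (∀ i, 0 < f i) →
      Real.log (s ^ n * ∏ i, f i) = n * Real.log s + ∑ i, Real.log (f i) := by
    intro q f hf
    rw [Real.log_mul (pow_ne_zero _ hs') (Finset.prod_ne_zero_iff.2 fun i _ => ne_of_gt (hf i)),
      Real.log_pow, Real.log_prod fun i _ => ne_of_gt (hf i)]
  have hls1 : ∀ i, (0:ℝ) < 1 + l₁ i / s := fun i => by
    have := hl₁0 i; positivity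
  have hls2 : ∀ i, (0:ℝ) < 1 + l₂ i / s := fun i => by
    have := hl₂0 i; positivity
  have hlμ : ∀ i, (0:ℝ) < 1 + μ i := fun i => by linarith [hμ0 i]
  have hKval : K = (1/2) * ∑ i, Real.log (1 + μ i)
      - (1/4) * ((∑ i, Real.log (1 + l₁ i / s)) + ∑ i, Real.log (1 + l₂ i / s)) := by
    rw [hK, hdet0, hdet1, hdet2, hlog_aux _ hlμ, hlog_aux _ hls1, hlog_aux _ hls2]
    ring
  -- pointwise log bound
  have hpt : ∀ i, Real.log (1 + μ i) ≥
      2 * c₄ * (if μ i ≠ 0 then (1:ℝ) else 0)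
        + ((1 + 3*p)/(1+p)^2 * μ i - (μ i)^2/(1+p)^2) := by
    intro i
    rcases eq_or_ne (μ i) 0 with h | h
    · simp [h]
    · rw [if_pos h]
      have h1 := hlog (μ i) (heig i h)
      have h2 : Real.log (1+p) + (μ i - p)/(1+p) - (μ i - p)^2/(1+p)^2
          = 2 * c₄ * 1 + ((1 + 3*p)/(1+p)^2 * μ i - (μ i)^2/(1+p)^2) := by
        rw [hc₄]
        field_simp
        ring
      linarith [h1, h2.symm.le]
  have hsum : (∑ i, Real.log (1 + μ i)) ≥
      2 * c₄ * m + ((1 + 3*p)/(1+p)^2 * ∑ i, μ i) - (∑ i, (μ i)^2)/(1+p)^2 := by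
    have h1 := Finset.sum_le_sum (fun i (_ : i ∈ Finset.univ) => (hpt i))
    have h2 : ∑ i, (2 * c₄ * (if μ i ≠ 0 then (1:ℝ) else 0)
        + ((1 + 3*p)/(1+p)^2 * μ i - (μ i)^2/(1+p)^2))
        = 2 * c₄ * m + ((1 + 3*p)/(1+p)^2 * ∑ i, μ i) - (∑ i, (μ i)^2)/(1+p)^2 := by
      rw [Finset.sum_add_distrib, ← Finset.mul_sum, Finset.sum_boole, ← hm,
        Finset.sum_sub_distrib, ← Finset.mul_sum, ← Finset.sum_div]
      ring
    rw [← h2]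
    exact h1
  -- trace identities
  have htr1 : ∑ i, μ i = (2*s)⁻¹ * ((∑ i, l₁ i) + ∑ i, l₂ i) := by
    rw [← auxC hDh, hD, Matrix.trace_smul, Matrix.trace_add,
      aux_trace_UdU U₁ hU₁, aux_trace_UdU U₂ hU₂, smul_eq_mul]
  set C : ℝ := ∑ i, ∑ j, l₁ i * l₂ j * ((U₁ᵀ * U₂) i j) ^ 2 with hCdef
  have htr2 : ∑ i, (μ i)^2 = (2*s)⁻¹ * (2*s)⁻¹ *
      ((∑ i, (l₁ i)^2) + (∑ i, (l₂ i)^2) + 2 * C) := by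
    rw [← auxD hDh, hD]
    rw [Matrix.smul_mul, Matrix.mul_smul, Matrix.trace_smul, Matrix.trace_smul,
      Matrix.add_mul, Matrix.mul_add, Matrix.mul_add, Matrix.trace_add, Matrix.trace_add,
      Matrix.trace_add, aux_trace_sq_s11 U₁ hU₁, aux_trace_sq_s11 U₂ hU₂, aux_cross_trace U₁ U₂,
      Matrix.trace_mul_comm (U₂ * Matrix.diagonal l₂ * U₂ᵀ), aux_cross_trace U₁ U₂]
    simp only [smul_eq_mul, ← hCdef]
    ring
  -- cross trace bound
  set T : ℝ := (U₁ᵀ * U₂ * U₂ᵀ * U₁).trace with hTdef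
  have hC : C ≤ l₁ 0 * l₂ 0 * T := by
    rw [hTdef, aux_gram_trace, Finset.mul_sum]
    refine Finset.sum_le_sum fun i _ => ?_
    rw [Finset.mul_sum]
    refine Finset.sum_le_sum fun j _ => ?_
    have h1 : l₁ i * l₂ j ≤ l₁ 0 * l₂ 0 :=
      mul_le_mul (hl₁max i) (hl₂max j) (hl₂0 j) (hl₁0 0)
    exact mul_le_mul_of_nonneg_right h1 (sq_nonneg _)
  -- key algebraic identity
  have hkey : ((1 + 3*p)/(1+p)^2 * ∑ i, μ i) - (∑ i, (μ i)^2)/(1+p)^2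
      - 2 * ((1 + 3*p)/(4*s*(1+p)^2) * ((∑ i, l₁ i) + ∑ i, l₂ i)
          - ((∑ i, (l₁ i)^2) + ∑ i, (l₂ i)^2)/(8*s^2*(1+p)^2)
          - (l₁ 0 * l₂ 0/(4*s^2*(1+p)^2)) * T)
      = (l₁ 0 * l₂ 0 * T - C)/(2*s^2*(1+p)^2) := by
    rw [htr1, htr2]
    field_simp
    ring
  have hkey2 : (0:ℝ) ≤ (l₁ 0 * l₂ 0 * T - C)/(2*s^2*(1+p)^2) := by
    apply div_nonneg (by linarith) (by positivity)
  have ha : (∑ i, (l₁ i + l₂ i)) = (∑ i, l₁ i) + ∑ i, l₂ i := Finset.sum_add_distrib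
  have hSL : (∑ i, (Real.log (1 + l₁ i / s) + Real.log (1 + l₂ i / s)))
      = (∑ i, Real.log (1 + l₁ i / s)) + ∑ i, Real.log (1 + l₂ i / s) :=
    Finset.sum_add_distrib
  have main : K ≥ c₄ * m - (l₁ 0 * l₂ 0 / (4 * s ^ 2 * (1 + p) ^ 2)) * T - c₅ := by
    rw [hc₅, ha, hSL]
    linarith [hKval, hsum, hkey, hkey2]
  refine ⟨main, ?_⟩
  have : Real.exp (-K) ≤ Real.exp (-(c₄ * m) +
      (l₁ 0 * l₂ 0 / (4 * s ^ 2 * (1 + p) ^ 2)) * T + c₅) := by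
    apply Real.exp_le_exp.2
    linarith [main]
  linarith [this]
end

section
/- Let X ∈ ℝ^{n×N} be such that XXᵀ is invertible, let T ∈ ℝ^{N×N} be symmetric positive semidefinite, and set P⋆ = (XXᵀ)⁻¹ X T Xᵀ (XXᵀ)⁻¹. Then P⋆ is symmetric positive semidefinite and for every matrix P ∈ ℝ^{n×n} one has ‖Xᵀ P⋆ X − T‖_F ≤ ‖Xᵀ P X − T‖_F; in particular P⋆ minimizes ‖Xᵀ P X − T‖_F² over all positive semidefinite P. -/
open Matrix

/-- The Frobenius norm of a real matrix. -/
noncomputable def frobNorm {m k : ℕ} (M : Matrix (Fin m) (Fin k) ℝ) : ℝ :=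
  Real.sqrt (∑ i, ∑ j, (M i j) ^ 2)

lemma frobSq_eq_trace {N : ℕ} (M : Matrix (Fin N) (Fin N) ℝ) :
    (∑ i, ∑ j, (M i j) ^ 2) = (Mᵀ * M).trace := by
  simp [Matrix.trace, Matrix.mul_apply, Matrix.diag, sq]
  rw [Finset.sum_comm]

theorem stmt_15 {n N : ℕ} (X : Matrix (Fin n) (Fin N) ℝ)
    (hX : IsUnit (X * Xᵀ).det)
    (T : Matrix (Fin N) (Fin N) ℝ) (hT : T.PosSemidef)
    (Pstar : Matrix (Fin n) (Fin n) ℝ)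
    (hPstar : Pstar = (X * Xᵀ)⁻¹ * X * T * Xᵀ * (X * Xᵀ)⁻¹) :
    Pstar.PosSemidef ∧
      ∀ P : Matrix (Fin n) (Fin n) ℝ,
        frobNorm (Xᵀ * Pstar * X - T) ≤ frobNorm (Xᵀ * P * X - T) := by
  have hinv : (X * Xᵀ)⁻¹ * (X * Xᵀ) = 1 := Matrix.nonsing_inv_mul _ hX
  have hinv' : (X * Xᵀ) * (X * Xᵀ)⁻¹ = 1 := Matrix.mul_nonsing_inv _ hX
  have hsymm : ((X * Xᵀ)⁻¹)ᵀ = (X * Xᵀ)⁻¹ := by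
    rw [Matrix.transpose_nonsing_inv, Matrix.transpose_mul, Matrix.transpose_transpose]
  obtain ⟨Pi, hPi⟩ : ∃ M : Matrix (Fin N) (Fin N) ℝ, M = Xᵀ * (X * Xᵀ)⁻¹ * X := ⟨_, rfl⟩
  have hPit : Piᵀ = Pi := by
    rw [hPi, Matrix.transpose_mul, Matrix.transpose_mul, Matrix.transpose_transpose, hsymm,
      Matrix.mul_assoc]
  have hXPi : X * Pi = X := by
    rw [hPi, ← Matrix.mul_assoc, ← Matrix.mul_assoc, hinv', Matrix.one_mul]
  have hPiX : Pi * Xᵀ = Xᵀ := by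
    rw [hPi, Matrix.mul_assoc, Matrix.mul_assoc, hinv, Matrix.mul_one]
  have hidem : Pi * Pi = Pi := by
    have h1 : Pi * Pi = Xᵀ * (X * Xᵀ)⁻¹ * (X * Pi) := by
      rw [hPi, Matrix.mul_assoc]
    rw [h1, hXPi, ← hPi]
  have hBT : Xᵀ * Pstar * X = Pi * T * Pi := by
    rw [hPstar, hPi]
    simp only [Matrix.mul_assoc]
  constructor
  · rw [hPstar]
    have h := hT.mul_mul_conjTranspose_same ((X * Xᵀ)⁻¹ * X)
    simpa [Matrix.conjTranspose_eq_transpose_of_trivial, Matrix.transpose_mul, hsymm, Matrix.mul_assoc] using h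
  · intro P
    obtain ⟨B, hB⟩ : ∃ M : Matrix (Fin N) (Fin N) ℝ, M = Pi * T * Pi := ⟨_, rfl⟩
    obtain ⟨A, hA⟩ : ∃ M : Matrix (Fin N) (Fin N) ℝ, M = Xᵀ * P * X := ⟨_, rfl⟩
    have hsand : Pi * A * Pi = A := by
      rw [hA, show Pi * (Xᵀ * P * X) * Pi = (Pi * Xᵀ) * P * (X * Pi) by
        simp only [Matrix.mul_assoc], hPiX, hXPi]
    have hAform : Pi * (A - T) * Pi = A - B := by
      rw [Matrix.mul_sub, Matrix.sub_mul, hsand, hB]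
    have hEt : (A - B)ᵀ = Pi * (A - T)ᵀ * Pi := by
      rw [← hAform, Matrix.transpose_mul, Matrix.transpose_mul, hPit, Matrix.mul_assoc]
    have hPiD : Pi * (B - T) * Pi = 0 := by
      rw [Matrix.mul_sub, Matrix.sub_mul, hB,
        show Pi * (Pi * T * Pi) * Pi = (Pi * Pi) * T * (Pi * Pi) by
          simp only [Matrix.mul_assoc], hidem]
      simp
    have hcross : ((A - B)ᵀ * (B - T)).trace = 0 := by
      rw [hEt, show Pi * (A - T)ᵀ * Pi * (B - T) = Pi * ((A - T)ᵀ * (Pi * (B - T))) by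
        simp only [Matrix.mul_assoc], Matrix.trace_mul_comm,
        show (A - T)ᵀ * (Pi * (B - T)) * Pi = (A - T)ᵀ * (Pi * (B - T) * Pi) by
          simp only [Matrix.mul_assoc], hPiD]
      simp
    have hcross' : ((B - T)ᵀ * (A - B)).trace = 0 := by
      rw [Matrix.trace_mul_comm, ← Matrix.trace_transpose, Matrix.transpose_mul,
        Matrix.transpose_transpose, Matrix.trace_mul_comm, hcross]
    have hdecomp : (∑ i, ∑ j, ((A - T) i j) ^ 2)
        = (∑ i, ∑ j, ((A - B) i j) ^ 2) + (∑ i, ∑ j, ((B - T) i j) ^ 2) := by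
      rw [frobSq_eq_trace, frobSq_eq_trace, frobSq_eq_trace]
      have hsplit : A - T = (A - B) + (B - T) := by abel
      rw [hsplit, Matrix.transpose_add, Matrix.add_mul, Matrix.mul_add, Matrix.mul_add,
        Matrix.trace_add, Matrix.trace_add, Matrix.trace_add, hcross, hcross']
      ring
    have hnonneg : 0 ≤ ∑ i, ∑ j, ((A - B) i j) ^ 2 :=
      Finset.sum_nonneg fun i _ => Finset.sum_nonneg fun j _ => sq_nonneg _
    have hBeq : Xᵀ * Pstar * X - T = B - T := by rw [hBT, hB]
    have hAeq : Xᵀ * P * X - T = A - T := by rw [hA]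
    rw [frobNorm, frobNorm, hBeq, hAeq]
    apply Real.sqrt_le_sqrt
    rw [hdecomp]
    linarith
end
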